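/- There is no triangulated closed surface K on a 10-element vertex set V that is centrally symmetric under an involution σ and whose edge set consists of all 2-element subsets of V except the five pairs {v, σ(v)} (i.e., there is no centrally symmetric tight triangulated surface on 10 vertices). -/

import Mathlib

/-- A simple graph is a single cycle iff it is connected and 2-regular. -/
def IsSingleCycle {α : Type*} (G : SimpleGraph α) : Prop :=
  G.Connected ∧ ∀ a : α, (G.neighborSet a).ncard = 2

section Tri

variable {V : Type*} [DecidableEq V]

/-- The edges of a family of simplices: the 2-element subsets of its members. -/
def triEdges (K : Finset (Finset V)) : Finset (Finset V) :=
  K.biUnion fun T => T.powersetCard 2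

/-- The underlying graph of a family of simplices. -/
def cplxGraph (K : Finset (Finset V)) : SimpleGraph V where
  Adj a b := a ≠ b ∧ ∃ T ∈ K, a ∈ T ∧ b ∈ T
  symm := ⟨by
    rintro a b ⟨h, T, hT, ha, hb⟩
    exact ⟨h.symm, T, hT, hb, ha⟩⟩
  loopless := ⟨fun a h => h.1 rfl⟩

/-- The link graph of a vertex `v`: `a,b` are joined iff `{v,a,b}` is a simplex. -/
def linkGraph (K : Finset (Finset V)) (v : V) : SimpleGraph V where
  Adj a b := a ≠ b ∧ a ≠ v ∧ b ≠ v ∧ ({v, a, b} : Finset V) ∈ K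
  symm := ⟨by
    rintro a b ⟨h1, h2, h3, h4⟩
    refine ⟨h1.symm, h3, h2, ?_⟩
    rwa [Finset.pair_comm b a]⟩
  loopless := ⟨fun a h => h.1 rfl⟩

/-- Euler characteristic of a triangle family on vertex set `W`. -/
def eulerCharOn (W : Finset V) (K : Finset (Finset V)) : ℤ :=
  (W.card : ℤ) - ((triEdges K).card : ℤ) + (K.card : ℤ)

/-- `K` is a triangulated closed surface on the vertex set `W`. -/
def IsTriSurfaceOn (W : Finset V) (K : Finset (Finset V)) : Prop :=
  (∀ T ∈ K, T.card = 3 ∧ T ⊆ W) ∧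
  ((cplxGraph K).induce (W : Set V)).Connected ∧
  (∀ e ∈ triEdges K, (K.filter fun T => e ⊆ T).card = 2) ∧
  (∀ v ∈ W, IsSingleCycle ((linkGraph K v).induce ((cplxGraph K).neighborSet v)))

/-- `K` is centrally symmetric on vertex set `W` under the involution `σ`. -/
def IsCSOn (W : Finset V) (K : Finset (Finset V)) (σ : V → V) : Prop :=
  Set.MapsTo σ (W : Set V) (W : Set V) ∧
  (∀ v ∈ W, σ (σ v) = v) ∧
  (∀ T ∈ K, T.image σ ∈ K) ∧
  (∀ v ∈ W, σ v ≠ v) ∧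
  (∀ e ∈ triEdges K, e.image σ ≠ e) ∧
  (∀ T ∈ K, T.image σ ≠ T)

/-- Orientability of a triangulated surface. -/
def IsOrientableTri (K : Finset (Finset V)) : Prop :=
  ∃ ori : Finset V → V → V → Bool,
    (∀ T ∈ K, ∀ a ∈ T, ∀ b ∈ T, a ≠ b → ori T a b = !ori T b a) ∧
    (∀ T ∈ K, ∀ a b c : V, a ≠ b → b ≠ c → a ≠ c → T = {a, b, c} → ori T a b = ori T b c) ∧
    (∀ T ∈ K, ∀ T' ∈ K, T ≠ T' → ∀ a b : V, a ≠ b → a ∈ T → b ∈ T → a ∈ T' → b ∈ T' →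
      ori T a b = ori T' b a)

end Tri

/-- There is no centrally symmetric tight triangulated closed surface on 10 vertices:
no triangulated closed surface on a 10-element vertex set, centrally symmetric under an
involution `σ`, whose edge set consists of all pairs except the five pairs `{v, σ v}`. -/
theorem no_tight_CS_surface_on_ten_vertices {V : Type} [Fintype V] [DecidableEq V]
    (hV : Fintype.card V = 10) :
    ¬ ∃ (K : Finset (Finset V)) (σ : V → V),
        IsTriSurfaceOn Finset.univ K ∧ IsCSOn Finset.univ K σ ∧
        triEdges K =
          (Finset.univ : Finset V).powersetCard 2 \
            Finset.univ.image (fun v => ({v, σ v} : Finset V)) := by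

  rintro ⟨K, σ, ⟨hT3, -, hE2, -⟩, ⟨-, hinv, -, hfix, -, -⟩, hE⟩
  have h45 : ((Finset.univ : Finset V).powersetCard 2).card = 45 := by
    rw [Finset.card_powersetCard, Finset.card_univ, hV]
    decide
  have hpair : ∀ v : V, ({v, σ v} : Finset V).card = 2 := by
    intro v
    rw [Finset.card_insert_of_notMem (by simp [Ne.symm (hfix v (Finset.mem_univ v))]),
      Finset.card_singleton]
  have himgsub : Finset.univ.image (fun v => ({v, σ v} : Finset V)) ⊆
      (Finset.univ : Finset V).powersetCard 2 := by
    intro e he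
    simp only [Finset.mem_image] at he
    obtain ⟨v, -, rfl⟩ := he
    exact Finset.mem_powersetCard.mpr ⟨Finset.subset_univ _, hpair v⟩
  have hfib : ∀ v : V,
      (Finset.univ.filter fun w => ({w, σ w} : Finset V) = ({v, σ v} : Finset V))
        = {v, σ v} := by
    intro v
    ext w
    simp only [Finset.mem_filter, Finset.mem_univ, true_and, Finset.mem_insert,
      Finset.mem_singleton]
    constructor
    · intro h
      have : w ∈ ({v, σ v} : Finset V) := by rw [← h]; simp
      simpa using this
    · rintro (rfl | rfl)
      · rfl
      · rw [hinv v (Finset.mem_univ v), Finset.pair_comm]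
  have himg : (Finset.univ.image (fun v => ({v, σ v} : Finset V))).card = 5 := by
    have h10 := Finset.card_eq_sum_card_image (fun v => ({v, σ v} : Finset V))
      (Finset.univ : Finset V)
    rw [Finset.card_univ, hV] at h10
    have hfc : ∀ b ∈ Finset.univ.image (fun v => ({v, σ v} : Finset V)),
        (Finset.univ.filter fun w => ({w, σ w} : Finset V) = b).card = 2 := by
      intro b hb
      simp only [Finset.mem_image] at hb
      obtain ⟨v, -, rfl⟩ := hb
      rw [hfib v, hpair v]
    rw [Finset.sum_congr rfl hfc, Finset.sum_const, smul_eq_mul] at h10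
    omega
  have h40 : (triEdges K).card = 40 := by
    rw [hE, Finset.card_sdiff_of_subset himgsub, h45, himg]
  have hkey : ∀ T ∈ K, ((triEdges K).filter fun e => e ⊆ T) = T.powersetCard 2 := by
    intro T hT
    ext e
    simp only [Finset.mem_filter, Finset.mem_powersetCard, triEdges, Finset.mem_biUnion]
    constructor
    · rintro ⟨⟨T', hT', -, hc⟩, heT⟩
      exact ⟨heT, hc⟩
    · rintro ⟨heT, hc⟩
      exact ⟨⟨T, hT, heT, hc⟩, heT⟩
  have hsum : ∑ e ∈ triEdges K, (K.filter fun T => e ⊆ T).card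
      = ∑ T ∈ K, ((triEdges K).filter fun e => e ⊆ T).card := by
    simp_rw [Finset.card_filter]
    exact Finset.sum_comm
  have hleft : ∑ e ∈ triEdges K, (K.filter fun T => e ⊆ T).card = 80 := by
    rw [Finset.sum_congr rfl hE2, Finset.sum_const, h40, smul_eq_mul]
  have hright : ∑ T ∈ K, ((triEdges K).filter fun e => e ⊆ T).card = 3 * K.card := by
    have h3 : ∀ T ∈ K, ((triEdges K).filter fun e => e ⊆ T).card = 3 := by
      intro T hT
      rw [hkey T hT, Finset.card_powersetCard, (hT3 T hT).1]
      decide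
    rw [Finset.sum_congr rfl h3, Finset.sum_const, smul_eq_mul, Nat.mul_comm]
  rw [hleft, hright] at hsum
  omega
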